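/- Under the Bregman setup, suppose that for every nonempty, bounded and convex subset S of C the function b is uniformly convex on S (i.e., there exists ψ : [0,∞) → [0,∞) with ψ(t) > 0 for t > 0 and b(λx + (1−λ)y) + λ(1−λ)ψ(‖x−y‖) ≤ λ b(x) + (1−λ) b(y) for all x, y ∈ S, λ ∈ (0,1)). Let (x_i) be a sequence in C and (y_i) a sequence in U with lim_{i→∞} B(x_i, y_i) = 0. If one of the two sequences is norm-bounded, then the other sequence is norm-bounded as well, and moreover lim_{i→∞} ‖x_i − y_i‖ = 0. -/

import Mathlib

open Filter Topology

section Aux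

variable {X : Type*} [NormedAddCommGroup X] [NormedSpace ℝ X]

lemma my_bdd_of_eventually (x : ℕ → X) (M : ℝ)
    (h : ∀ᶠ i in atTop, ‖x i‖ ≤ M) : Bornology.IsBounded (Set.range x) := by
  obtain ⟨N, hN⟩ := eventually_atTop.mp h
  have hsub : Set.range x ⊆ (x '' Set.Iio N) ∪ Metric.closedBall 0 M := by
    rintro _ ⟨i, rfl⟩
    rcases lt_or_ge i N with h' | h'
    · exact Or.inl ⟨i, h', rfl⟩
    · exact Or.inr (mem_closedBall_zero_iff.2 (hN i h'))
  exact (((Set.finite_Iio N).image x).isBounded.union Metric.isBounded_closedBall).subset hsub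

/-- Gradient inequality refined: Bregman divergence dominates the convexity gap. -/
lemma my_gradA {C : Set X} (hCconv : Convex ℝ C) {b : X → ℝ} (hbconv : ConvexOn ℝ C b)
    {x y : X} (hx : x ∈ C) (hy : y ∈ interior C)
    {D : X →L[ℝ] ℝ}
    (hb' : ∀ v : X,
      Tendsto (fun t : ℝ => (b (y + t • v) - b y) / t) (𝓝[≠] (0:ℝ)) (𝓝 (D v)))
    {t : ℝ} (ht : 0 < t) (ht1 : t ≤ 1) :
    t * b x + (1 - t) * b y - b (t • x + (1 - t) • y) ≤ b x - b y - D (x - y) := by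
  have hyC : y ∈ C := interior_subset hy
  have hmC : y + t • (x - y) ∈ C := by
    have : t • x + (1 - t) • y ∈ C := hCconv hx hyC ht.le (by linarith) (by ring)
    convert this using 1
    module
  have hmeq : y + t • (x - y) = t • x + (1 - t) • y := by module
  -- derivative dominated by difference quotient at t
  have hle : D (x - y) ≤ (b (y + t • (x - y)) - b y) / t := by
    have htend : Tendsto (fun s : ℝ => (b (y + s • (x - y)) - b y) / s)
        (𝓝[>] (0:ℝ)) (𝓝 (D (x - y))) :=
      (hb' (x - y)).mono_left
        (nhdsWithin_mono _ (fun s hs => ne_of_gt hs))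
    refine le_of_tendsto htend ?_
    filter_upwards [Ioo_mem_nhdsGT_of_mem (Set.mem_Ico.2 ⟨le_refl 0, ht⟩)] with s hs
    obtain ⟨hs0, hst⟩ := hs
    have hrw : y + s • (x - y) = (s / t) • (y + t • (x - y)) + (1 - s / t) • y := by
      match_scalars <;> (field_simp; try ring)
    have hcv : b (y + s • (x - y)) ≤
        (s / t) * b (y + t • (x - y)) + (1 - s / t) * b y := by
      rw [hrw]
      exact hbconv.2 hmC hyC (by positivity) (by
        have : s / t ≤ 1 := (div_le_one ht).2 hst.le
        linarith) (by ring)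
    have key : b (y + s • (x - y)) - b y ≤ (s / t) * (b (y + t • (x - y)) - b y) := by
      nlinarith [hcv]
    calc (b (y + s • (x - y)) - b y) / s
        ≤ (s / t) * (b (y + t • (x - y)) - b y) / s := by
          exact div_le_div_of_nonneg_right key hs0.le
      _ = (b (y + t • (x - y)) - b y) / t := by
          field_simp
  rw [le_div_iff₀ ht] at hle
  rw [hmeq] at hle
  have hgap : b (t • x + (1 - t) • y) ≤ t * b x + (1 - t) * b y :=
    hbconv.2 hx hyC ht.le (by linarith) (by ring)
  nlinarith [hle, hgap, mul_nonneg (sub_nonneg.2 ht1) (sub_nonneg.2 hgap)]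

/-- Key lower bound: if two points of the segment `[y, x]` at parameters `β < α` lie in a
set on which `b` is uniformly convex, the Bregman divergence is bounded below. -/
lemma my_keyM {C : Set X} (hCconv : Convex ℝ C) {b : X → ℝ} (hbconv : ConvexOn ℝ C b)
    {x y : X} (hx : x ∈ C) (hy : y ∈ interior C)
    {D : X →L[ℝ] ℝ}
    (hb' : ∀ v : X,
      Tendsto (fun t : ℝ => (b (y + t • v) - b y) / t) (𝓝[≠] (0:ℝ)) (𝓝 (D v)))
    {S : Set X} {ψ : ℝ → ℝ}
    (hψ : ∀ p ∈ S, ∀ q ∈ S, ∀ l ∈ Set.Ioo (0:ℝ) 1,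
      b (l • p + (1 - l) • q) + l * (1 - l) * ψ ‖p - q‖ ≤ l * b p + (1 - l) * b q)
    {α β : ℝ} (hβ : 0 ≤ β) (hαβ : β < α) (hα1 : α ≤ 1)
    (hpα : α • x + (1 - α) • y ∈ S) (hpβ : β • x + (1 - β) • y ∈ S) :
    ψ ((α - β) * ‖x - y‖) / 4 ≤ b x - b y - D (x - y) := by
  have hyC : y ∈ C := interior_subset hy
  set pα := α • x + (1 - α) • y with hpαdef
  set pβ := β • x + (1 - β) • y with hpβdef
  have hnorm : ‖pα - pβ‖ = (α - β) * ‖x - y‖ := by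
    have : pα - pβ = (α - β) • (x - y) := by rw [hpαdef, hpβdef]; module
    rw [this, norm_smul, Real.norm_eq_abs, abs_of_pos (by linarith)]
  have ht0 : 0 < (α + β) / 2 := by linarith
  have ht1 : (α + β) / 2 ≤ 1 := by linarith
  have hmid : (1/2 : ℝ) • pα + (1 - 1/2 : ℝ) • pβ
      = ((α + β) / 2) • x + (1 - (α + β) / 2) • y := by
    rw [hpαdef, hpβdef]; module
  have hUC := hψ pα hpα pβ hpβ (1/2) ⟨by norm_num, by norm_num⟩
  rw [hnorm, hmid] at hUC
  have hbα : b pα ≤ α * b x + (1 - α) * b y :=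
    hbconv.2 hx hyC (by linarith) (by linarith) (by ring)
  have hbβ : b pβ ≤ β * b x + (1 - β) * b y :=
    hbconv.2 hx hyC hβ (by linarith) (by ring)
  have hA := my_gradA hCconv hbconv hx hy hb' ht0 ht1
  linarith

end Aux

/-- Under the Bregman setup, if `b` is uniformly convex on every
nonempty, bounded and convex subset of `C`, `(x_i)` is a sequence in `C`, `(y_i)` a
sequence in `U`, `B(x_i, y_i) → 0`, and one of the two sequences is norm-bounded, then
both are norm-bounded and `‖x_i − y_i‖ → 0`. -/
theorem bounded_uniformly_convex_bregman_sequential_consistency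
    {X : Type*} [NormedAddCommGroup X] [NormedSpace ℝ X]
    (C : Set X) (hC : C.Nonempty) (hCconv : Convex ℝ C)
    (hU : (interior C).Nonempty)
    (b : X → ℝ) (hbconv : ConvexOn ℝ C b)
    (b' : X → X →L[ℝ] ℝ)
    (hb' : ∀ y ∈ interior C, ∀ v : X,
      Tendsto (fun t : ℝ => (b (y + t • v) - b y) / t) (𝓝[≠] (0:ℝ)) (𝓝 (b' y v)))
    (huc : ∀ S : Set X, S ⊆ C → S.Nonempty → Bornology.IsBounded S → Convex ℝ S →
      ∃ ψ : ℝ → ℝ, (∀ t : ℝ, 0 < t → 0 < ψ t) ∧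
        ∀ x ∈ S, ∀ y ∈ S, ∀ l ∈ Set.Ioo (0:ℝ) 1,
          b (l • x + (1 - l) • y) + l * (1 - l) * ψ ‖x - y‖ ≤ l * b x + (1 - l) * b y)
    (x y : ℕ → X) (hx : ∀ i, x i ∈ C) (hy : ∀ i, y i ∈ interior C)
    (hB : Tendsto (fun i => b (x i) - b (y i) - b' (y i) (x i - y i)) atTop (𝓝 0))
    (hbdd : Bornology.IsBounded (Set.range x) ∨ Bornology.IsBounded (Set.range y)) :
    Bornology.IsBounded (Set.range x) ∧ Bornology.IsBounded (Set.range y) ∧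
      Tendsto (fun i => ‖x i - y i‖) atTop (𝓝 0) := by
  have hyC : ∀ i, y i ∈ C := fun i => interior_subset (hy i)
  -- Step 1: eventually ‖x i - y i‖ ≤ 1.
  have hev : ∀ᶠ i in atTop, ‖x i - y i‖ ≤ 1 := by
    -- Choose auxiliary points on the segment, close to the bounded sequence.
    rcases hbdd with hbx | hby
    · -- x bounded: take points near x i
      obtain ⟨M, hM⟩ := isBounded_iff_forall_norm_le.mp hbx
      set v : ℕ → X := fun i =>
        if 1 < ‖x i - y i‖ then
          (1 - ‖x i - y i‖⁻¹) • x i + ‖x i - y i‖⁻¹ • y i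
        else x i with hvdef
      have hvC : ∀ i, v i ∈ C := by
        intro i
        simp only [hvdef]
        by_cases h : 1 < ‖x i - y i‖
        · rw [if_pos h]
          have h0 : (0:ℝ) < ‖x i - y i‖⁻¹ := by positivity
          have h1 : ‖x i - y i‖⁻¹ ≤ 1 := by
            rw [inv_le_one_iff₀]; right; linarith
          exact hCconv (hx i) (hyC i) (by linarith) h0.le (by ring)
        · rw [if_neg h]; exact hx i
      have hvbd : ∀ i, ‖v i‖ ≤ M + 1 := by
        intro i
        simp only [hvdef]
        by_cases h : 1 < ‖x i - y i‖
        · rw [if_pos h]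
          have hd : (0:ℝ) < ‖x i - y i‖ := by linarith
          have heq : (1 - ‖x i - y i‖⁻¹) • x i + ‖x i - y i‖⁻¹ • y i
              = x i - ‖x i - y i‖⁻¹ • (x i - y i) := by module
          rw [heq]
          calc ‖x i - ‖x i - y i‖⁻¹ • (x i - y i)‖
              ≤ ‖x i‖ + ‖‖x i - y i‖⁻¹ • (x i - y i)‖ := norm_sub_le _ _
            _ = ‖x i‖ + ‖x i - y i‖⁻¹ * ‖x i - y i‖ := by
                rw [norm_smul, Real.norm_eq_abs, abs_of_pos (by positivity)]
            _ ≤ M + 1 := by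
                rw [inv_mul_cancel₀ (ne_of_gt hd)]
                have := hM (x i) ⟨i, rfl⟩
                linarith
        · rw [if_neg h]
          have := hM (x i) ⟨i, rfl⟩; linarith
      set S := convexHull ℝ (Set.range v ∪ Set.range x) with hSdef
      have hSC : S ⊆ C :=
        convexHull_min (Set.union_subset (Set.range_subset_iff.2 hvC)
          (Set.range_subset_iff.2 hx)) hCconv
      have hSbd : Bornology.IsBounded S := by
        rw [hSdef, isBounded_convexHull]
        exact (my_bdd_of_eventually v (M+1) (Filter.Eventually.of_forall hvbd)).union
          (my_bdd_of_eventually x M (Filter.Eventually.of_forall fun i => hM (x i) ⟨i, rfl⟩))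
      obtain ⟨ψ, hψpos, hψ⟩ := huc S hSC
        ⟨v 0, subset_convexHull ℝ _ (Or.inl ⟨0, rfl⟩)⟩ hSbd (convex_convexHull ℝ _)
      have hkey : ∀ i, 1 < ‖x i - y i‖ →
          ψ 1 / 4 ≤ b (x i) - b (y i) - b' (y i) (x i - y i) := by
        intro i hi
        have hd : (0:ℝ) < ‖x i - y i‖ := by linarith
        have hβα : 1 - ‖x i - y i‖⁻¹ < 1 := by
          have : (0:ℝ) < ‖x i - y i‖⁻¹ := by positivity
          linarith
        have hβ0 : (0:ℝ) ≤ 1 - ‖x i - y i‖⁻¹ := by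
          have : ‖x i - y i‖⁻¹ ≤ 1 := by rw [inv_le_one_iff₀]; right; linarith
          linarith
        have hpα : (1:ℝ) • x i + (1 - 1 : ℝ) • y i ∈ S := by
          have : (1:ℝ) • x i + (1 - 1 : ℝ) • y i = x i := by module
          rw [this]
          exact subset_convexHull ℝ _ (Or.inr ⟨i, rfl⟩)
        have hpβ : (1 - ‖x i - y i‖⁻¹) • x i + (1 - (1 - ‖x i - y i‖⁻¹)) • y i ∈ S := by
          have : (1 - (1 - ‖x i - y i‖⁻¹)) = ‖x i - y i‖⁻¹ := by ring
          rw [this]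
          have : v i = (1 - ‖x i - y i‖⁻¹) • x i + ‖x i - y i‖⁻¹ • y i := by
            simp only [hvdef, if_pos hi]
          rw [← this]
          exact subset_convexHull ℝ _ (Or.inl ⟨i, rfl⟩)
        have := my_keyM hCconv hbconv (hx i) (hy i) (hb' (y i) (hy i)) hψ
          hβ0 hβα (le_refl 1) hpα hpβ
        have hone : (1 - (1 - ‖x i - y i‖⁻¹)) * ‖x i - y i‖ = 1 := by
          field_simp
          ring
        rw [hone] at this
        exact this
      have hevB := hB.eventually_lt_const (show (0:ℝ) < ψ 1 / 4 by
        have := hψpos 1 one_pos; linarith)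
      filter_upwards [hevB] with i hi
      by_contra h
      push_neg at h
      exact absurd (hkey i h) (not_le.2 hi)
    · -- y bounded: take points near y i
      obtain ⟨M, hM⟩ := isBounded_iff_forall_norm_le.mp hby
      set v : ℕ → X := fun i =>
        if 1 < ‖x i - y i‖ then
          ‖x i - y i‖⁻¹ • x i + (1 - ‖x i - y i‖⁻¹) • y i
        else y i with hvdef
      have hvC : ∀ i, v i ∈ C := by
        intro i
        simp only [hvdef]
        by_cases h : 1 < ‖x i - y i‖
        · rw [if_pos h]
          have h0 : (0:ℝ) < ‖x i - y i‖⁻¹ := by positivity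
          have h1 : ‖x i - y i‖⁻¹ ≤ 1 := by
            rw [inv_le_one_iff₀]; right; linarith
          exact hCconv (hx i) (hyC i) h0.le (by linarith) (by ring)
        · rw [if_neg h]; exact hyC i
      have hvbd : ∀ i, ‖v i‖ ≤ M + 1 := by
        intro i
        simp only [hvdef]
        by_cases h : 1 < ‖x i - y i‖
        · rw [if_pos h]
          have hd : (0:ℝ) < ‖x i - y i‖ := by linarith
          have heq : ‖x i - y i‖⁻¹ • x i + (1 - ‖x i - y i‖⁻¹) • y i
              = y i + ‖x i - y i‖⁻¹ • (x i - y i) := by module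
          rw [heq]
          calc ‖y i + ‖x i - y i‖⁻¹ • (x i - y i)‖
              ≤ ‖y i‖ + ‖‖x i - y i‖⁻¹ • (x i - y i)‖ := norm_add_le _ _
            _ = ‖y i‖ + ‖x i - y i‖⁻¹ * ‖x i - y i‖ := by
                rw [norm_smul, Real.norm_eq_abs, abs_of_pos (by positivity)]
            _ ≤ M + 1 := by
                rw [inv_mul_cancel₀ (ne_of_gt hd)]
                have := hM (y i) ⟨i, rfl⟩
                linarith
        · rw [if_neg h]
          have := hM (y i) ⟨i, rfl⟩; linarith
      set S := convexHull ℝ (Set.range v ∪ Set.range y) with hSdef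
      have hSC : S ⊆ C :=
        convexHull_min (Set.union_subset (Set.range_subset_iff.2 hvC)
          (Set.range_subset_iff.2 hyC)) hCconv
      have hSbd : Bornology.IsBounded S := by
        rw [hSdef, isBounded_convexHull]
        exact (my_bdd_of_eventually v (M+1) (Filter.Eventually.of_forall hvbd)).union
          (my_bdd_of_eventually y M (Filter.Eventually.of_forall fun i => hM (y i) ⟨i, rfl⟩))
      obtain ⟨ψ, hψpos, hψ⟩ := huc S hSC
        ⟨v 0, subset_convexHull ℝ _ (Or.inl ⟨0, rfl⟩)⟩ hSbd (convex_convexHull ℝ _)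
      have hkey : ∀ i, 1 < ‖x i - y i‖ →
          ψ 1 / 4 ≤ b (x i) - b (y i) - b' (y i) (x i - y i) := by
        intro i hi
        have hd : (0:ℝ) < ‖x i - y i‖ := by linarith
        have hα0 : (0:ℝ) < ‖x i - y i‖⁻¹ := by positivity
        have hα1 : ‖x i - y i‖⁻¹ ≤ 1 := by rw [inv_le_one_iff₀]; right; linarith
        have hpα : ‖x i - y i‖⁻¹ • x i + (1 - ‖x i - y i‖⁻¹) • y i ∈ S := by
          have : v i = ‖x i - y i‖⁻¹ • x i + (1 - ‖x i - y i‖⁻¹) • y i := by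
            simp only [hvdef, if_pos hi]
          rw [← this]
          exact subset_convexHull ℝ _ (Or.inl ⟨i, rfl⟩)
        have hpβ : (0:ℝ) • x i + (1 - 0 : ℝ) • y i ∈ S := by
          have : (0:ℝ) • x i + (1 - 0 : ℝ) • y i = y i := by module
          rw [this]
          exact subset_convexHull ℝ _ (Or.inr ⟨i, rfl⟩)
        have := my_keyM hCconv hbconv (hx i) (hy i) (hb' (y i) (hy i)) hψ
          (le_refl 0) hα0 hα1 hpα hpβ
        have hone : (‖x i - y i‖⁻¹ - 0) * ‖x i - y i‖ = 1 := by
          field_simp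
          ring
        rw [hone] at this
        exact this
      have hevB := hB.eventually_lt_const (show (0:ℝ) < ψ 1 / 4 by
        have := hψpos 1 one_pos; linarith)
      filter_upwards [hevB] with i hi
      by_contra h
      push_neg at h
      exact absurd (hkey i h) (not_le.2 hi)
  -- Step 2: both sequences are bounded.
  have hboth : Bornology.IsBounded (Set.range x) ∧ Bornology.IsBounded (Set.range y) := by
    rcases hbdd with hbx | hby
    · refine ⟨hbx, ?_⟩
      obtain ⟨M, hM⟩ := isBounded_iff_forall_norm_le.mp hbx
      refine my_bdd_of_eventually y (M + 1) ?_
      filter_upwards [hev] with i hi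
      have h1 := hM (x i) ⟨i, rfl⟩
      have h2 : ‖y i‖ ≤ ‖x i - y i‖ + ‖x i‖ := by
        calc ‖y i‖ = ‖-(x i - y i) + x i‖ := by
              rw [show -(x i - y i) + x i = y i from by abel]
          _ ≤ ‖-(x i - y i)‖ + ‖x i‖ := norm_add_le _ _
          _ = ‖x i - y i‖ + ‖x i‖ := by rw [norm_neg]
      linarith
    · refine ⟨?_, hby⟩
      obtain ⟨M, hM⟩ := isBounded_iff_forall_norm_le.mp hby
      refine my_bdd_of_eventually x (M + 1) ?_
      filter_upwards [hev] with i hi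
      have h1 := hM (y i) ⟨i, rfl⟩
      have h2 : ‖x i‖ ≤ ‖x i - y i‖ + ‖y i‖ := by
        calc ‖x i‖ = ‖(x i - y i) + y i‖ := by
              rw [show (x i - y i) + y i = x i from by abel]
          _ ≤ ‖x i - y i‖ + ‖y i‖ := norm_add_le _ _
      linarith
  obtain ⟨hbx, hby⟩ := hboth
  refine ⟨hbx, hby, ?_⟩
  -- Step 3: ‖x i - y i‖ → 0.
  set S := convexHull ℝ (Set.range x ∪ Set.range y) with hSdef
  have hSC : S ⊆ C :=
    convexHull_min (Set.union_subset (Set.range_subset_iff.2 hx)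
      (Set.range_subset_iff.2 hyC)) hCconv
  have hSbd : Bornology.IsBounded S := by
    rw [hSdef, isBounded_convexHull]; exact hbx.union hby
  have hSconv : Convex ℝ S := convex_convexHull ℝ _
  obtain ⟨ψ, hψpos, hψ⟩ := huc S hSC
    ⟨x 0, subset_convexHull ℝ _ (Or.inl ⟨0, rfl⟩)⟩ hSbd hSconv
  have hxS : ∀ i, x i ∈ S := fun i => subset_convexHull ℝ _ (Or.inl ⟨i, rfl⟩)
  have hyS : ∀ i, y i ∈ S := fun i => subset_convexHull ℝ _ (Or.inr ⟨i, rfl⟩)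
  have hclaim : ∀ ε : ℝ, 0 < ε → ∀ᶠ i in atTop, ‖x i - y i‖ ≤ ε := by
    intro ε hε
    have hkey : ∀ i, ε < ‖x i - y i‖ →
        ψ ε / 4 ≤ b (x i) - b (y i) - b' (y i) (x i - y i) := by
      intro i hi
      have hd : (0:ℝ) < ‖x i - y i‖ := lt_trans hε hi
      have hα0 : (0:ℝ) < ε / ‖x i - y i‖ := by positivity
      have hα1 : ε / ‖x i - y i‖ ≤ 1 := by
        rw [div_le_one hd]; exact hi.le
      have hpα : (ε / ‖x i - y i‖) • x i + (1 - ε / ‖x i - y i‖) • y i ∈ S :=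
        hSconv (hxS i) (hyS i) hα0.le (by linarith) (by ring)
      have hpβ : (0:ℝ) • x i + (1 - 0 : ℝ) • y i ∈ S := by
        have : (0:ℝ) • x i + (1 - 0 : ℝ) • y i = y i := by module
        rw [this]; exact hyS i
      have := my_keyM hCconv hbconv (hx i) (hy i) (hb' (y i) (hy i)) hψ
        (le_refl 0) hα0 hα1 hpα hpβ
      have hone : (ε / ‖x i - y i‖ - 0) * ‖x i - y i‖ = ε := by
        field_simp
        ring
      rw [hone] at this
      exact this
    have hevB := hB.eventually_lt_const (show (0:ℝ) < ψ ε / 4 by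
      have := hψpos ε hε; linarith)
    filter_upwards [hevB] with i hi
    by_contra h
    push_neg at h
    exact absurd (hkey i h) (not_le.2 hi)
  rw [show (0:ℝ) = 0 from rfl]
  refine NormedAddCommGroup.tendsto_nhds_zero.2 ?_
  intro ε hε
  filter_upwards [hclaim (ε/2) (by linarith)] with i hi
  have : ‖x i - y i‖ ≥ 0 := norm_nonneg _
  rw [Real.norm_eq_abs, abs_of_nonneg this]
  linarith
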